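/- Let d ≥ 1, L : ℝ^d → ℝ, λ > 0, γ > 0, τ ≥ 0, and let S ⊆ {1,…,d} have cardinality s with γ̄ := γ − 16·s·τ > 0. Suppose θ*, θ̂ ∈ ℝ^d satisfy: (i) L(θ*) ≤ L(θ̂); (ii) L(θ̂) + λ‖θ̂‖₁ ≤ L(θ*) + λ‖θ*‖₁; and (iii) L(θ̂) ≥ L(θ*) + (γ/2)‖θ̂ − θ*‖₂² − τ‖θ̂ − θ*‖₁². Then ‖θ̂ − θ*‖₂ ≤ (4/γ̄)·√s·λ + 2·√((λ‖θ*_{Sᶜ}‖₁ + 4τ‖θ*_{Sᶜ}‖₁²)/γ̄). -/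

import Mathlib

open Finset

set_option maxHeartbeats 1000000 in
/-- ℓ₂-error bound for the regularized minimizer, Lemma `opterror`, part (a).
Under the regularized-optimality inequality (ii), the restricted strong convexity
inequality (iii), and optimality of `θ*` for `L` (i), the ℓ₂-error of `θ̂` is bounded as
`‖θ̂ − θ*‖₂ ≤ (4/γ̄)·√s·λ + 2·√((λ‖θ*_{Sᶜ}‖₁ + 4τ‖θ*_{Sᶜ}‖₁²)/γ̄)` where `γ̄ = γ − 16sτ`. -/
theorem regularized_min_l2_error {d : ℕ} (hd : 1 ≤ d) (L : (Fin d → ℝ) → ℝ)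
    (lam γ τ : ℝ) (hlam : 0 < lam) (hγ : 0 < γ) (hτ : 0 ≤ τ)
    (S : Finset (Fin d)) (hbar : 0 < γ - 16 * (S.card : ℝ) * τ)
    (θs θh : Fin d → ℝ)
    (h1 : L θs ≤ L θh)
    (h2 : L θh + lam * ∑ j, |θh j| ≤ L θs + lam * ∑ j, |θs j|)
    (h3 : L θh ≥ L θs + γ / 2 * (∑ j, (θh j - θs j) ^ 2)
            - τ * (∑ j, |θh j - θs j|) ^ 2) :
    Real.sqrt (∑ j, (θh j - θs j) ^ 2)
      ≤ 4 / (γ - 16 * (S.card : ℝ) * τ) * Real.sqrt (S.card : ℝ) * lam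
        + 2 * Real.sqrt ((lam * (∑ j ∈ Sᶜ, |θs j|) + 4 * τ * (∑ j ∈ Sᶜ, |θs j|) ^ 2)
            / (γ - 16 * (S.card : ℝ) * τ)) := by
  set s : ℝ := (S.card : ℝ) with hsdef
  have hs0 : (0:ℝ) ≤ s := Nat.cast_nonneg _
  set g : ℝ := γ - 16 * s * τ with hgdef
  set ν2 : ℝ := ∑ j, (θh j - θs j) ^ 2 with hν2def
  have hν2nn : 0 ≤ ν2 := Finset.sum_nonneg fun j _ => sq_nonneg _
  set ν : ℝ := Real.sqrt ν2 with hνdef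
  have hνsq : ν ^ 2 = ν2 := Real.sq_sqrt hν2nn
  have hνnn : 0 ≤ ν := Real.sqrt_nonneg _
  set r : ℝ := Real.sqrt s with hrdef
  have hrnn : 0 ≤ r := Real.sqrt_nonneg _
  have hrsq : r ^ 2 = s := Real.sq_sqrt hs0
  set A : ℝ := ∑ j ∈ S, |θh j - θs j| with hAdef
  set B : ℝ := ∑ j ∈ Sᶜ, |θh j - θs j| with hBdef
  set b : ℝ := ∑ j ∈ Sᶜ, |θs j| with hbdef
  clear_value s g ν2 ν r A B b
  have hAnn : 0 ≤ A := hAdef ▸ Finset.sum_nonneg fun j _ => abs_nonneg _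
  have hBnn : 0 ≤ B := hBdef ▸ Finset.sum_nonneg fun j _ => abs_nonneg _
  have hbnn : 0 ≤ b := hbdef ▸ Finset.sum_nonneg fun j _ => abs_nonneg _
  -- l1 norm splitting
  have hv1 : (∑ j, |θh j - θs j|) = A + B := by
    rw [hAdef, hBdef]; exact (Finset.sum_add_sum_compl S _).symm
  -- difference of l1 norms bound
  have hdiffS : ∑ j ∈ S, (|θs j| - |θh j|) ≤ A := by
    rw [hAdef]
    apply Finset.sum_le_sum
    intro j _
    have h := abs_sub_abs_le_abs_sub (θs j) (θh j)
    have h2 : |θs j - θh j| = |θh j - θs j| := abs_sub_comm _ _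
    linarith
  have hdiffSc : ∑ j ∈ Sᶜ, (|θs j| - |θh j|) ≤ 2 * b - B := by
    have : ∑ j ∈ Sᶜ, (|θs j| - |θh j|) ≤ ∑ j ∈ Sᶜ, (2 * |θs j| - |θh j - θs j|) := by
      apply Finset.sum_le_sum
      intro j _
      have h := abs_sub (θh j) (θs j)
      linarith
    calc ∑ j ∈ Sᶜ, (|θs j| - |θh j|) ≤ ∑ j ∈ Sᶜ, (2 * |θs j| - |θh j - θs j|) := this
      _ = 2 * b - B := by
        rw [Finset.sum_sub_distrib, ← Finset.mul_sum, hbdef, hBdef]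
  have hdiff : (∑ j, |θs j|) - (∑ j, |θh j|) ≤ A - B + 2 * b := by
    have e1 : (∑ j, |θs j|) = ∑ j ∈ S, |θs j| + ∑ j ∈ Sᶜ, |θs j| :=
      (Finset.sum_add_sum_compl S _).symm
    have e2 : (∑ j, |θh j|) = ∑ j ∈ S, |θh j| + ∑ j ∈ Sᶜ, |θh j| :=
      (Finset.sum_add_sum_compl S _).symm
    have e3 : ∑ j ∈ S, (|θs j| - |θh j|) = ∑ j ∈ S, |θs j| - ∑ j ∈ S, |θh j| :=
      Finset.sum_sub_distrib _ _
    have e4 : ∑ j ∈ Sᶜ, (|θs j| - |θh j|) = ∑ j ∈ Sᶜ, |θs j| - ∑ j ∈ Sᶜ, |θh j| :=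
      Finset.sum_sub_distrib _ _
    linarith
  -- from h1 and h2, l1 norm does not increase
  have hnorm : 0 ≤ (∑ j, |θs j|) - (∑ j, |θh j|) := by
    nlinarith
  have hBA : B ≤ A + 2 * b := by linarith
  -- Cauchy-Schwarz: A^2 ≤ s * ν2
  have hcs : A ^ 2 ≤ s * ν2 := by
    rw [hAdef, hsdef, hν2def]
    have h1' := sq_sum_le_card_mul_sum_sq (s := S) (f := fun j => |θh j - θs j|)
    have e : ∑ j ∈ S, |θh j - θs j| ^ 2 = ∑ j ∈ S, (θh j - θs j) ^ 2 := by
      apply Finset.sum_congr rfl; intro j _; exact sq_abs _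
    have hsub : ∑ j ∈ S, (θh j - θs j) ^ 2 ≤ ∑ j, (θh j - θs j) ^ 2 := by
      apply Finset.sum_le_sum_of_subset_of_nonneg (Finset.subset_univ S)
      intro j _ _; exact sq_nonneg _
    calc (∑ j ∈ S, |θh j - θs j|) ^ 2 ≤ (S.card : ℝ) * ∑ j ∈ S, |θh j - θs j| ^ 2 := h1'
      _ = (S.card : ℝ) * ∑ j ∈ S, (θh j - θs j) ^ 2 := by rw [e]
      _ ≤ (S.card : ℝ) * ∑ j, (θh j - θs j) ^ 2 :=
          mul_le_mul_of_nonneg_left hsub (Nat.cast_nonneg _)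
  have hAr : A ≤ r * ν := by
    have h := Real.sqrt_le_sqrt hcs
    rwa [Real.sqrt_sq hAnn, Real.sqrt_mul hs0, ← hrdef, ← hνdef] at h
  -- main inequality chain
  have hq : γ / 2 * ν2 - τ * (A + B) ^ 2 ≤ lam * (A - B + 2 * b) := by
    have h2' : L θh - L θs ≤ lam * ((∑ j, |θs j|) - (∑ j, |θh j|)) := by
      rw [mul_sub]; linarith
    have h3' : γ / 2 * ν2 - τ * (A + B) ^ 2 ≤ L θh - L θs := by
      rw [← hv1]; linarith
    have h4' := mul_le_mul_of_nonneg_left hdiff hlam.le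
    linarith
  clear h1 h2 h3 hdiff hnorm hdiffS hdiffSc hd
  clear L
  have hτ1 : τ * (A + B) ^ 2 ≤ 8 * τ * (s * ν2) + 8 * τ * b ^ 2 := by
    have h1' : (A + B) ^ 2 ≤ 8 * A ^ 2 + 8 * b ^ 2 := by nlinarith [sq_nonneg (A - b)]
    nlinarith [mul_le_mul_of_nonneg_left h1' hτ, mul_le_mul_of_nonneg_left hcs hτ]
  have hlamA : lam * (A - B + 2 * b) ≤ lam * (r * ν) + 2 * lam * b := by
    nlinarith [mul_le_mul_of_nonneg_left hAr hlam.le]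
  have key : g * ν ^ 2 ≤ 2 * lam * r * ν + 4 * (lam * b + 4 * τ * b ^ 2) := by
    rw [hνsq, hgdef]; nlinarith
  -- final quadratic solving
  set t : ℝ := Real.sqrt ((lam * b + 4 * τ * b ^ 2) / g) with htdef
  have htnn : 0 ≤ t := Real.sqrt_nonneg _
  have hcnn : 0 ≤ (lam * b + 4 * τ * b ^ 2) / g := by positivity
  have htsq : g * t ^ 2 = lam * b + 4 * τ * b ^ 2 := by
    rw [htdef, Real.sq_sqrt hcnn]; field_simp
  clear_value t
  have hfin : ν ≤ 4 / g * r * lam + 2 * t := by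
    by_contra hcon
    push_neg at hcon
    have hcon' : 4 * lam * r + 2 * g * t < g * ν := by
      have he : 4 / g * r * lam + 2 * t = (4 * lam * r + 2 * g * t) / g := by
        field_simp
      rw [he] at hcon
      have := (div_lt_iff₀ hbar).mp hcon
      linarith
    have hν2t : 2 * t < ν := by
      have h0 : 0 ≤ 4 / g * r * lam := by positivity
      linarith
    have hνpos : 0 < ν := lt_of_le_of_lt (by positivity) hν2t
    nlinarith [mul_lt_mul_of_pos_right hcon' hνpos,
      mul_le_mul_of_nonneg_left hν2t.le (by positivity : (0:ℝ) ≤ 2 * g * t),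
      mul_nonneg (mul_nonneg hlam.le hrnn) hνnn]
  exact hfin
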